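/- Let M ≥ 2, α_k = M^{-k}, β_k = M^{2k}, and φ(z) = log|z₁| + Σ_{k=1}^∞ α_k log(|z₁| + |z₂/k|^{β_k}) on ℂ². Then for every z₂ ≠ 0, the Lelong number of φ at the point (0, z₂) equals 1. -/

import Mathlib

open MeasureTheory Filter Metric Complex Set Topology

noncomputable section

/-- `e2 x` represents `e^{-2x}` for extended-real `x` (value `0` at `x = ⊥`,
where the correct value `+∞` cannot be represented in `ℝ`; in all statements the
`⊥`-locus is negligible or handled separately). -/
def e2 (x : EReal) : ℝ := if x = ⊥ then 0 else Real.exp (-2 * x.toReal)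

/-- Subharmonicity of `u : ℂ → EReal` on `U`: upper semicontinuity together with
the sub-mean-value inequality over all sufficiently small circles. -/
def SubharmonicOn' (u : ℂ → EReal) (U : Set ℂ) : Prop :=
  UpperSemicontinuousOn u U ∧
    ∀ z ∈ U, ∀ᶠ (r : ℝ) in 𝓝[>] (0 : ℝ),
      u z ≤ (((2 * Real.pi)⁻¹ *
        ∫ θ in (0:ℝ)..(2 * Real.pi),
          (u (z + (r : ℂ) * Complex.exp ((θ : ℂ) * Complex.I))).toReal : ℝ) : EReal)

/-- `u` is subharmonic on some open neighborhood of `z₀`. -/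
def SubharmonicNear (u : ℂ → EReal) (z₀ : ℂ) : Prop :=
  ∃ U : Set ℂ, IsOpen U ∧ z₀ ∈ U ∧ SubharmonicOn' u U

/-- The Lelong number of `u` at `z₀` equals `γ`:
`(sup_{|z-z₀|=r} u)/log r → γ` as `r → 0⁺`. -/
def HasLelongAt (u : ℂ → EReal) (z₀ : ℂ) (γ : ℝ) : Prop :=
  Tendsto (fun r : ℝ => (⨆ z ∈ sphere z₀ r, u z).toReal / Real.log r)
    (𝓝[>] (0:ℝ)) (𝓝 γ)

/-- `f` is integrable on some ball around `z₀` (local integrability near `z₀`). -/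
def LocInt (f : ℂ → ℝ) (z₀ : ℂ) : Prop :=
  ∃ r > 0, IntegrableOn f (ball z₀ r) volume

/-- Plurisubharmonicity of `u : ℂ × ℂ → EReal` on `U`: upper semicontinuity
together with subharmonicity of the restriction to every complex line. -/
def PSHOn (u : ℂ × ℂ → EReal) (U : Set (ℂ × ℂ)) : Prop :=
  UpperSemicontinuousOn u U ∧
    ∀ a b : ℂ × ℂ, SubharmonicOn' (fun t : ℂ => u (a + t • b)) {t : ℂ | a + t • b ∈ U}

/-- The (two dimensional) Lelong number of `u` at `x` equals `γ`:
`(sup_{|z-x|≤r} u)/log r → γ` as `r → 0⁺`. -/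
def HasLelongAt2 (u : ℂ × ℂ → EReal) (x : ℂ × ℂ) (γ : ℝ) : Prop :=
  Tendsto (fun r : ℝ => (⨆ z ∈ closedBall x r, u z).toReal / Real.log r)
    (𝓝[>] (0:ℝ)) (𝓝 γ)

/-- `f` is integrable on some ball around `x` in `ℂ²`. -/
def LocInt2 (f : ℂ × ℂ → ℝ) (x : ℂ × ℂ) : Prop :=
  ∃ r > 0, IntegrableOn f (ball x r) volume

/-- The k-th term (k ≥ 1) of the Guan–Li series:
`α_k · log(|z₁| + |z₂/k|^{β_k})` with `α_k = M^{-k}`, `β_k = M^{2k}`. -/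
def phiTerm (M : ℝ) (k : ℕ) (z : ℂ × ℂ) : ℝ :=
  M ^ (-(k : ℤ)) * Real.log (‖z.1‖ +
    (‖z.2‖ / (k : ℝ)) ^ (M ^ (2 * k) : ℝ))

/-- The plurisubharmonic weight
`φ(z) = log|z₁| + ∑_{k≥1} M^{-k} log(|z₁| + |z₂/k|^{M^{2k}})`,
with value `⊥ = -∞` on `{z₁ = 0}` (where the series diverges to `-∞`). -/
def phi (M : ℝ) (z : ℂ × ℂ) : EReal :=
  if z.1 = 0 then ⊥ else
    ((Real.log (‖z.1‖) + ∑' k : ℕ, phiTerm M (k + 1) z : ℝ) : EReal)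

namespace Stmt6Aux

lemma phiTerm_eq (M : ℝ) (k : ℕ) (z : ℂ × ℂ) :
    phiTerm M k z = M⁻¹ ^ k * Real.log (‖z.1‖ +
      (‖z.2‖ / (k : ℝ)) ^ (M ^ (2 * k) : ℝ)) := by
  rw [phiTerm, zpow_neg, zpow_natCast, inv_pow]

variable {M : ℝ}

lemma hM1 (hM : 2 ≤ M) : 1 < M := lt_of_lt_of_le one_lt_two hM
lemma hM0 (hM : 2 ≤ M) : 0 < M := lt_trans one_pos (hM1 hM)
lemma hq0 (hM : 2 ≤ M) : 0 < M⁻¹ := inv_pos.2 (hM0 hM)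
lemma hq1 (hM : 2 ≤ M) : M⁻¹ < 1 := by
  rw [inv_lt_one_iff₀]; right; exact hM1 hM

lemma beta_nonneg (hM : 2 ≤ M) (k : ℕ) : (0:ℝ) ≤ M ^ (2 * k) :=
  pow_nonneg (hM0 hM).le _

/-- Summability of the series for `z₁ ≠ 0`. -/
lemma summable_phiTerm (hM : 2 ≤ M) (z : ℂ × ℂ) (hx : z.1 ≠ 0) :
    Summable (fun k => phiTerm M (k + 1) z) := by
  set x := ‖z.1‖ with hxdef
  have hx0 : 0 < x := hxdef ▸ norm_pos_iff.mpr hx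
  set b := ‖z.2‖ with hbdef
  set c : ℝ := |Real.log x| + Real.log (x + 1) with hcdef
  have hc0 : 0 ≤ c := add_nonneg (abs_nonneg _) (Real.log_nonneg (by linarith [hx0]))
  apply Summable.of_norm_bounded_eventually (g := fun k => c * M⁻¹ * M⁻¹ ^ k)
  · exact ((summable_geometric_of_lt_one (hq0 hM).le (hq1 hM)).mul_left _)
  · rw [Nat.cofinite_eq_atTop, eventually_atTop]
    refine ⟨⌈b⌉₊, fun k hk => ?_⟩
    have hb1 : b / ((k:ℝ) + 1) ≤ 1 := by
      rw [div_le_one (by positivity)]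
      calc b ≤ (⌈b⌉₊ : ℝ) := Nat.le_ceil b
        _ ≤ (k : ℝ) := by exact_mod_cast hk
        _ ≤ (k : ℝ) + 1 := by linarith
    have hb0 : 0 ≤ b / ((k:ℝ) + 1) := by positivity
    set t : ℝ := (b / ((k:ℝ) + 1)) ^ (M ^ (2 * (k+1)) : ℝ) with htdef
    have ht0 : 0 ≤ t := Real.rpow_nonneg hb0 _
    have ht1 : t ≤ 1 := Real.rpow_le_one hb0 hb1 (beta_nonneg hM _)
    have harg : x ≤ x + t ∧ x + t ≤ x + 1 := ⟨by linarith, by linarith⟩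
    have hlog : |Real.log (x + t)| ≤ c := by
      rcases le_or_gt 1 (x + t) with h | h
      · rw [_root_.abs_of_nonneg (Real.log_nonneg h)]
        calc Real.log (x + t) ≤ Real.log (x + 1) := Real.log_le_log (by linarith) harg.2
          _ ≤ c := by simp [hcdef]
      · rw [_root_.abs_of_nonpos (Real.log_nonpos (by positivity) h.le)]
        have h1 : Real.log x ≤ Real.log (x + t) := Real.log_le_log hx0 harg.1
        have h2 : -Real.log (x + t) ≤ -Real.log x := by linarith
        calc -Real.log (x + t) ≤ -Real.log x := h2
          _ ≤ |Real.log x| := neg_le_abs _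
          _ ≤ c := by simp [hcdef]; exact Real.log_nonneg (by linarith)
    have hcast : ((k + 1 : ℕ) : ℝ) = (k : ℝ) + 1 := by push_cast; ring
    rw [phiTerm_eq, hcast, Real.norm_eq_abs, abs_mul,
      _root_.abs_of_nonneg (pow_nonneg (hq0 hM).le _)]
    calc M⁻¹ ^ (k+1) * |Real.log (x + t)| ≤ M⁻¹ ^ (k+1) * c := by
          exact mul_le_mul_of_nonneg_left hlog (pow_nonneg (hq0 hM).le _)
      _ = c * M⁻¹ * M⁻¹ ^ k := by rw [pow_succ]; ring

/-- Uniform upper bound for the sum part of `φ` on a neighborhood of `(0, z₂)`. -/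
lemma tsum_upper (hM : 2 ≤ M) (A : ℝ) (hA : 1 ≤ A) :
    ∃ C : ℝ, 0 ≤ C ∧ ∀ z : ℂ × ℂ, z.1 ≠ 0 → ‖z.1‖ ≤ 1 →
      ‖z.2‖ ≤ A → (∑' k : ℕ, phiTerm M (k + 1) z) ≤ C := by
  set g : ℕ → ℝ := fun k => M⁻¹ ^ (k+1) *
    Real.log (1 + (A / ((k:ℝ) + 1)) ^ (M ^ (2 * (k+1)) : ℝ)) with hgdef
  have hg0 : ∀ k, 0 ≤ g k := by
    intro k
    apply mul_nonneg (pow_nonneg (hq0 hM).le _)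
    apply Real.log_nonneg
    have : (0:ℝ) ≤ (A / ((k:ℝ) + 1)) ^ (M ^ (2 * (k+1)) : ℝ) :=
      Real.rpow_nonneg (by positivity) _
    linarith
  have hgsum : Summable g := by
    apply Summable.of_norm_bounded_eventually (g :=
      fun k => (M⁻¹ * Real.log 2) * M⁻¹ ^ k)
      ((summable_geometric_of_lt_one (hq0 hM).le (hq1 hM)).mul_left _)
    rw [Nat.cofinite_eq_atTop, eventually_atTop]
    refine ⟨⌈A⌉₊, fun k hk => ?_⟩
    have hb1 : A / ((k:ℝ) + 1) ≤ 1 := by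
      rw [div_le_one (by positivity)]
      calc A ≤ (⌈A⌉₊ : ℝ) := Nat.le_ceil A
        _ ≤ (k : ℝ) := by exact_mod_cast hk
        _ ≤ (k : ℝ) + 1 := by linarith
    have ht1 : (A / ((k:ℝ) + 1)) ^ (M ^ (2 * (k+1)) : ℝ) ≤ 1 :=
      Real.rpow_le_one (by positivity) hb1 (beta_nonneg hM _)
    have ht0 : (0:ℝ) ≤ (A / ((k:ℝ) + 1)) ^ (M ^ (2 * (k+1)) : ℝ) :=
      Real.rpow_nonneg (by positivity) _
    rw [Real.norm_eq_abs, _root_.abs_of_nonneg (hg0 k), hgdef]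
    calc M⁻¹ ^ (k+1) * Real.log (1 + (A / ((k:ℝ) + 1)) ^ (M ^ (2 * (k+1)) : ℝ))
        ≤ M⁻¹ ^ (k+1) * Real.log 2 := by
          apply mul_le_mul_of_nonneg_left _ (pow_nonneg (hq0 hM).le _)
          exact Real.log_le_log (by linarith) (by linarith)
      _ = (M⁻¹ * Real.log 2) * M⁻¹ ^ k := by rw [pow_succ]; ring
  refine ⟨∑' k, g k, tsum_nonneg hg0, fun z hz h1 h2 => ?_⟩
  have hx0 : 0 < ‖z.1‖ := norm_pos_iff.mpr hz
  by_cases hs : Summable (fun k => phiTerm M (k + 1) z)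
  · apply Summable.tsum_le_tsum _ hs hgsum
    intro k
    rw [phiTerm_eq]
    have hcast : ((k + 1 : ℕ) : ℝ) = (k : ℝ) + 1 := by push_cast; ring
    rw [hcast]
    apply mul_le_mul_of_nonneg_left _ (pow_nonneg (hq0 hM).le _)
    apply Real.log_le_log (by positivity)
    have : (‖z.2‖ / ((k:ℝ) + 1)) ^ (M ^ (2 * (k+1)) : ℝ)
        ≤ (A / ((k:ℝ) + 1)) ^ (M ^ (2 * (k+1)) : ℝ) := by
      apply Real.rpow_le_rpow (by positivity) _ (beta_nonneg hM _)
      gcongr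
    linarith
  · rw [tsum_eq_zero_of_not_summable hs]
    exact tsum_nonneg hg0

lemma tendsto_div_log (c : ℝ) :
    Tendsto (fun r : ℝ => c / Real.log r) (𝓝[>] (0:ℝ)) (𝓝 0) := by
  have h1 : Tendsto (fun r : ℝ => -Real.log r) (𝓝[>] (0:ℝ)) atTop :=
    tendsto_neg_atBot_atTop.comp Real.tendsto_log_nhdsGT_zero
  have h2 := h1.inv_tendsto_atTop
  have h3 := h2.const_mul (-c)
  rw [mul_zero] at h3
  apply h3.congr
  intro r
  simp only [Pi.inv_apply, inv_neg, div_eq_mul_inv]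
  ring

end Stmt6Aux

open Stmt6Aux in
/-- For `M ≥ 2` and
`φ(z) = log|z₁| + ∑_{k≥1} M^{-k} log(|z₁| + |z₂/k|^{M^{2k}})`, the Lelong number
of `φ` at every point `(0, z₂)` with `z₂ ≠ 0` equals `1`. -/
theorem stmt6 (M : ℝ) (hM : 2 ≤ M) :
    ∀ z₂ : ℂ, z₂ ≠ 0 → HasLelongAt2 (phi M) (0, z₂) 1 := by
  intro z₂ hz₂
  set a := ‖z₂‖ with hadef
  have ha0 : 0 < a := hadef ▸ norm_pos_iff.mpr hz₂
  obtain ⟨C, hC0, hC⟩ := tsum_upper hM (a + 1) (by linarith)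
  rw [HasLelongAt2, Metric.tendsto_nhds]
  intro ε hε
  obtain ⟨K, hK⟩ : ∃ K : ℕ, ((2:ℝ)⁻¹) ^ K < ε / 2 :=
    exists_pow_lt_of_lt_one (by linarith) (by norm_num)
  set εK : ℝ := M⁻¹ ^ (K+1) * (1 - M⁻¹)⁻¹ with hεKdef
  have hq0' : (0:ℝ) < M⁻¹ := hq0 hM
  have hq1' : M⁻¹ < 1 := hq1 hM
  have hqhalf : M⁻¹ ≤ 2⁻¹ := by
    rw [inv_le_inv₀ (hM0 hM) two_pos]; exact hM
  have hεK0 : 0 ≤ εK := mul_nonneg (pow_nonneg hq0'.le _)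
    (inv_nonneg.2 (by linarith))
  have hεKlt : εK < ε / 2 := by
    have h1 : M⁻¹ ^ (K+1) ≤ (2:ℝ)⁻¹ ^ (K+1) :=
      pow_le_pow_left₀ hq0'.le hqhalf _
    have h2 : (1 - M⁻¹)⁻¹ ≤ 2 := by
      rw [show (2:ℝ) = (2⁻¹)⁻¹ by norm_num]
      apply inv_anti₀ (by norm_num)
      linarith
    calc εK ≤ (2:ℝ)⁻¹ ^ (K+1) * 2 :=
          mul_le_mul h1 h2 (inv_nonneg.2 (by linarith)) (by positivity)
      _ = (2:ℝ)⁻¹ ^ K := by rw [pow_succ, mul_assoc]; norm_num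
      _ < ε / 2 := hK
  set D : ℝ := ∑ i ∈ Finset.range K, M⁻¹ ^ (i+1) *
    ((M ^ (2 * (i+1)) : ℝ) * Real.log (a / ((i:ℝ) + 1))) with hDdef
  have hev1 : ∀ᶠ r : ℝ in 𝓝[>] 0, r < 1 :=
    eventually_nhdsWithin_of_eventually_nhds (eventually_lt_nhds one_pos)
  have hev2 : ∀ᶠ r : ℝ in 𝓝[>] 0, |C / Real.log r| < ε := by
    have := (tendsto_div_log C).eventually (eventually_abs_sub_lt 0 hε)
    simpa using this
  have hev3 : ∀ᶠ r : ℝ in 𝓝[>] 0, |D / Real.log r| < ε / 2 - εK := by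
    have := (tendsto_div_log D).eventually
      (eventually_abs_sub_lt 0 (by linarith : (0:ℝ) < ε / 2 - εK))
    simpa using this
  filter_upwards [self_mem_nhdsWithin, hev1, hev2, hev3] with r hr0 hr1 h2 h3
  have hr0' : (0:ℝ) < r := hr0
  have hL : Real.log r < 0 := Real.log_neg hr0' hr1
  have hLne : Real.log r ≠ 0 := hL.ne
  set L := Real.log r with hLdef
  -- the point p = (r, z₂)
  set p : ℂ × ℂ := ((r:ℂ), z₂) with hpdef
  have hp1 : p.1 ≠ 0 := by
    simp only [hpdef]
    exact_mod_cast Complex.ofReal_ne_zero.2 hr0'.ne'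
  have habsp1 : ‖p.1‖ = r := by
    simp only [hpdef, Complex.norm_real, Real.norm_eq_abs, _root_.abs_of_pos hr0']
  have habsp2 : ‖p.2‖ = a := rfl
  have hpmem : p ∈ closedBall ((0:ℂ), z₂) r := by
    rw [mem_closedBall, Prod.dist_eq]
    simp only [hpdef]
    rw [Complex.dist_eq, Complex.dist_eq]
    simp [_root_.abs_of_pos hr0', Complex.norm_real, le_of_lt hr0']
  -- sum bounds at p
  have hsum : Summable (fun k => phiTerm M (k + 1) p) := summable_phiTerm hM p hp1
  -- tail lower bound
  have htail : εK * L ≤ ∑' i : ℕ, phiTerm M ((i + K) + 1) p := by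
    have hmsum : Summable (fun i : ℕ => M⁻¹ ^ i * (M⁻¹ ^ (K+1) * L)) :=
      (summable_geometric_of_lt_one hq0'.le hq1').mul_right _
    have htailsum : Summable (fun i : ℕ => phiTerm M ((i + K) + 1) p) := by
      have := (summable_nat_add_iff K).2 hsum
      exact this
    have hle : ∀ i : ℕ, M⁻¹ ^ i * (M⁻¹ ^ (K+1) * L) ≤ phiTerm M ((i + K) + 1) p := by
      intro i
      rw [phiTerm_eq]
      have ht0 : (0:ℝ) ≤ (‖p.2‖ / (((i + K) + 1 : ℕ):ℝ)) ^
          (M ^ (2 * ((i + K) + 1)) : ℝ) := Real.rpow_nonneg (by positivity) _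
      have hlog : L ≤ Real.log (‖p.1‖ +
          (‖p.2‖ / (((i + K) + 1 : ℕ):ℝ)) ^ (M ^ (2 * ((i + K) + 1)) : ℝ)) := by
        rw [hLdef]
        apply Real.log_le_log hr0'
        rw [habsp1]; linarith
      calc M⁻¹ ^ i * (M⁻¹ ^ (K+1) * L) = M⁻¹ ^ ((i + K) + 1) * L := by
            rw [show (i + K) + 1 = i + (K + 1) by ring, pow_add]; ring
        _ ≤ _ := mul_le_mul_of_nonneg_left hlog (pow_nonneg hq0'.le _)
    have := Summable.tsum_le_tsum hle hmsum htailsum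
    calc εK * L = ∑' i : ℕ, M⁻¹ ^ i * (M⁻¹ ^ (K+1) * L) := by
          rw [tsum_mul_right, tsum_geometric_of_lt_one hq0'.le hq1', hεKdef]; ring
      _ ≤ _ := this
  -- finite part lower bound
  have hfin : D ≤ ∑ i ∈ Finset.range K, phiTerm M (i + 1) p := by
    apply Finset.sum_le_sum
    intro i _
    rw [phiTerm_eq]
    have hcast : ((i + 1 : ℕ) : ℝ) = (i : ℝ) + 1 := by push_cast; ring
    have hbase : (0:ℝ) < a / ((i:ℝ) + 1) := by positivity
    have hlog : (M ^ (2 * (i+1)) : ℝ) * Real.log (a / ((i:ℝ) + 1)) ≤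
        Real.log (‖p.1‖ +
          (‖p.2‖ / ((i + 1 : ℕ):ℝ)) ^ (M ^ (2 * (i+1)) : ℝ)) := by
      rw [← Real.log_rpow hbase]
      apply Real.log_le_log (Real.rpow_pos_of_pos hbase _)
      rw [habsp2, hcast, habsp1]
      linarith
    exact mul_le_mul_of_nonneg_left hlog (pow_nonneg hq0'.le _)
  -- total lower bound on the sum
  have hSsum_low : D + εK * L ≤ ∑' k : ℕ, phiTerm M (k + 1) p := by
    rw [← Summable.sum_add_tsum_nat_add K hsum]
    exact add_le_add hfin htail
  -- upper bound on the sum at p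
  have hSsum_up : (∑' k : ℕ, phiTerm M (k + 1) p) ≤ C := by
    apply hC p hp1
    · rw [habsp1]; linarith
    · rw [habsp2]; linarith
  -- the supremum
  set S : EReal := ⨆ z ∈ closedBall ((0:ℂ), z₂) r, phi M z with hSdef
  have hupper : S ≤ ((L + C : ℝ) : EReal) := by
    rw [hSdef]
    apply iSup₂_le
    intro z hz
    rw [mem_closedBall, Prod.dist_eq] at hz
    have hz1 : ‖z.1‖ ≤ r := by
      have := (le_max_left (dist z.1 0) (dist z.2 z₂)).trans hz
      rwa [Complex.dist_eq, sub_zero] at this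
    have hz2 : ‖z.2‖ ≤ a + 1 := by
      have h := (le_max_right (dist z.1 0) (dist z.2 z₂)).trans hz
      rw [Complex.dist_eq] at h
      have : ‖z.2‖ - ‖z₂‖ ≤ ‖(z.2 - z₂)‖ := by
        simpa using norm_sub_norm_le z.2 z₂
      linarith
    rw [phi]
    split_ifs with h
    · exact bot_le
    · rw [EReal.coe_le_coe_iff]
      have hx0 : 0 < ‖z.1‖ := norm_pos_iff.mpr h
      have hlog : Real.log (‖z.1‖) ≤ L := Real.log_le_log hx0 hz1
      have hsum' : (∑' k : ℕ, phiTerm M (k + 1) z) ≤ C :=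
        hC z h (by linarith) hz2
      linarith
  have hlower : ((L + (D + εK * L) : ℝ) : EReal) ≤ S := by
    have hφp : phi M p = ((L + ∑' k : ℕ, phiTerm M (k + 1) p : ℝ) : EReal) := by
      rw [phi, if_neg hp1, habsp1]
    calc ((L + (D + εK * L) : ℝ) : EReal)
        ≤ ((L + ∑' k : ℕ, phiTerm M (k + 1) p : ℝ) : EReal) := by
          rw [EReal.coe_le_coe_iff]; linarith
      _ = phi M p := hφp.symm
      _ ≤ S := le_biSup (phi M) hpmem
  have hSne_top : S ≠ ⊤ := (lt_of_le_of_lt hupper (EReal.coe_lt_top _)).ne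
  have hSne_bot : S ≠ ⊥ := (lt_of_lt_of_le (EReal.bot_lt_coe _) hlower).ne'
  have hT1 : S.toReal ≤ L + C := by
    have := EReal.toReal_le_toReal hupper hSne_bot (EReal.coe_ne_top _)
    rwa [EReal.toReal_coe] at this
  have hT2 : L + (D + εK * L) ≤ S.toReal := by
    have := EReal.toReal_le_toReal hlower (EReal.coe_ne_bot _) hSne_top
    rwa [EReal.toReal_coe] at this
  set T := S.toReal with hTdef
  -- conclude
  rw [Real.dist_eq]
  have hF1 : C / L ≤ T / L - 1 := by
    have : T / L - 1 = (T - L) / L := by field_simp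
    rw [this]
    rw [div_le_div_right_of_neg hL]
    linarith
  have hF2 : T / L - 1 ≤ εK + D / L := by
    have : T / L - 1 = (T - L) / L := by field_simp
    rw [this]
    have h1 : εK + D / L = (εK * L + D) / L := by field_simp
    rw [h1, div_le_div_right_of_neg hL]
    linarith
  rw [abs_lt]
  constructor
  · have := neg_abs_le (C / L)
    have habs := h2
    calc -ε < -|C / L| := by linarith
      _ ≤ C / L := neg_abs_le _
      _ ≤ T / L - 1 := hF1
  · calc T / L - 1 ≤ εK + D / L := hF2
      _ ≤ εK + |D / L| := by linarith [le_abs_self (D / L)]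
      _ < εK + (ε / 2 - εK) := by linarith
      _ ≤ ε := by linarith

end
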